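/- Breakthrough trap upper bound: let 0 < θ_L < p < θ_H < 1, m ∈ (0,1), k > 0, λ_S > 0, and let m_S(θ_L) := m·θ_H / (m·θ_H + (1−m)·θ_L) be the posterior weight on q_H after a success. Define M(x) := m_S(θ_L)·g_{q_H}(x;λ_S) + (1−m_S(θ_L))·g_{q_L}(x;λ_S) − g_{q¹}(x;λ_S) for x : {0,1} → ℝ. Then for every x, M(x) ≤ (1/λ_S)·log((1−p)/(1−θ_H)) + ((1−m_S(θ_L))/λ_S)·log(p/θ_L). Consequently, if (1/λ_S)·log((1−p)/(1−θ_H)) < k, then there exists θ̄_L ∈ (0,p) such that for all θ_L ∈ (0,θ̄_L), sup_x M(x) < k. -/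

import Mathlib

lemma two_point_aux (lS α β C : ℝ) (hlS : 0 < lS)
    (hα1 : 0 < α) (hα2 : α < 1) (hβ1 : 0 < β) (hβ2 : β < 1) (hC : 0 < C)
    (h1 : β ≤ C * α) (h2 : 1 - β ≤ C * (1 - α)) (x : Fin 2 → ℝ) :
    (-(1 / lS) * Real.log (α * Real.exp (-lS * x 1) + (1 - α) * Real.exp (-lS * x 0)))
      - (-(1 / lS) * Real.log (β * Real.exp (-lS * x 1) + (1 - β) * Real.exp (-lS * x 0)))
      ≤ (1 / lS) * Real.log C := by
  set u := Real.exp (-lS * x 1) with hu_def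
  set v := Real.exp (-lS * x 0) with hv_def
  have hu : 0 < u := Real.exp_pos _
  have hv : 0 < v := Real.exp_pos _
  have hNα : 0 < α * u + (1 - α) * v :=
    add_pos (mul_pos hα1 hu) (mul_pos (by linarith) hv)
  have hNβ : 0 < β * u + (1 - β) * v :=
    add_pos (mul_pos hβ1 hu) (mul_pos (by linarith) hv)
  have hle : β * u + (1 - β) * v ≤ C * (α * u + (1 - α) * v) := by nlinarith
  have hlog : Real.log (β * u + (1 - β) * v) ≤ Real.log C + Real.log (α * u + (1 - α) * v) := by
    calc Real.log (β * u + (1 - β) * v) ≤ Real.log (C * (α * u + (1 - α) * v)) :=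
          Real.log_le_log hNβ hle
      _ = Real.log C + Real.log (α * u + (1 - α) * v) := Real.log_mul hC.ne' hNα.ne'
  have hpos : (0:ℝ) ≤ 1 / lS := by positivity
  nlinarith [mul_le_mul_of_nonneg_left hlog hpos]

theorem breakthrough_trap (p θH m k lS : ℝ)
    (hp : p ∈ Set.Ioo (0:ℝ) 1) (hH : θH ∈ Set.Ioo (0:ℝ) 1) (hpH : p < θH)
    (hm : m ∈ Set.Ioo (0:ℝ) 1) (hk : 0 < k) (hlS : 0 < lS) :
    let g : ℝ → (Fin 2 → ℝ) → ℝ := fun θ x =>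
      -(1 / lS) * Real.log (θ * Real.exp (-lS * x 1) + (1 - θ) * Real.exp (-lS * x 0))
    let mS : ℝ → ℝ := fun θL => m * θH / (m * θH + (1 - m) * θL)
    let M : ℝ → (Fin 2 → ℝ) → ℝ := fun θL x =>
      mS θL * g θH x + (1 - mS θL) * g θL x - g p x
    (∀ θL : ℝ, 0 < θL → θL < p → ∀ x : Fin 2 → ℝ,
        M θL x ≤ (1 / lS) * Real.log ((1 - p) / (1 - θH)) +
          ((1 - mS θL) / lS) * Real.log (p / θL)) ∧
      ((1 / lS) * Real.log ((1 - p) / (1 - θH)) < k →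
        ∃ θbar : ℝ, 0 < θbar ∧ θbar < p ∧
          ∀ θL : ℝ, 0 < θL → θL < θbar → (⨆ x : Fin 2 → ℝ, M θL x) < k) := by
  obtain ⟨hp0, hp1⟩ := hp
  obtain ⟨hH0, hH1⟩ := hH
  obtain ⟨hm0, hm1⟩ := hm
  intro g mS M
  -- basic facts about mS
  have hmS_facts : ∀ θL : ℝ, 0 < θL →
      0 < mS θL ∧ mS θL ≤ 1 ∧ 1 - mS θL ≤ ((1 - m) / (m * θH)) * θL := by
    intro θL hθL
    have hden : 0 < m * θH + (1 - m) * θL := by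
      have := mul_pos hm0 hH0
      have := mul_pos (by linarith : (0:ℝ) < 1 - m) hθL
      linarith
    have hnum : 0 < m * θH := mul_pos hm0 hH0
    constructor
    · exact div_pos hnum hden
    constructor
    · rw [div_le_one hden]; nlinarith
    · have h1mS : 1 - mS θL = ((1 - m) * θL) / (m * θH + (1 - m) * θL) := by
        show 1 - m * θH / (m * θH + (1 - m) * θL) = _
        field_simp
        ring
      rw [h1mS, div_le_iff₀ hden,
        show (1 - m) / (m * θH) * θL * (m * θH + (1 - m) * θL)
          = (1 - m) * θL * (m * θH + (1 - m) * θL) / (m * θH) by ring,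
        le_div_iff₀ hnum]
      nlinarith [sq_nonneg ((1 - m) * θL)]
  -- pointwise bound
  have key : ∀ θL : ℝ, 0 < θL → θL < p → ∀ x : Fin 2 → ℝ,
      M θL x ≤ (1 / lS) * Real.log ((1 - p) / (1 - θH)) +
        ((1 - mS θL) / lS) * Real.log (p / θL) := by
    intro θL hθL0 hθLp x
    obtain ⟨hmS0, hmS1, _⟩ := hmS_facts θL hθL0
    have hA : g θH x - g p x ≤ (1 / lS) * Real.log ((1 - p) / (1 - θH)) := by
      apply two_point_aux lS θH p _ hlS hH0 hH1 hp0 hp1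
      · exact div_pos (by linarith) (by linarith)
      · rw [div_mul_eq_mul_div, le_div_iff₀ (by linarith : (0:ℝ) < 1 - θH)]
        nlinarith
      · exact le_of_eq (div_mul_cancel₀ _ (by linarith : (1:ℝ) - θH ≠ 0)).symm
    have hB : g θL x - g p x ≤ (1 / lS) * Real.log (p / θL) := by
      apply two_point_aux lS θL p _ hlS hθL0 (by linarith) hp0 hp1
      · exact div_pos hp0 hθL0
      · exact le_of_eq (div_mul_cancel₀ _ hθL0.ne').symm
      · rw [div_mul_eq_mul_div, le_div_iff₀ hθL0]; nlinarith
    have hAnn : 0 ≤ (1 / lS) * Real.log ((1 - p) / (1 - θH)) := by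
      apply mul_nonneg (by positivity)
      apply Real.log_nonneg
      rw [le_div_iff₀ (by linarith : (0:ℝ) < 1 - θH)]; linarith
    have hBnn : 0 ≤ (1 / lS) * Real.log (p / θL) := by
      apply mul_nonneg (by positivity)
      apply Real.log_nonneg
      rw [le_div_iff₀ hθL0]; linarith
    have hMeq : M θL x = mS θL * (g θH x - g p x) + (1 - mS θL) * (g θL x - g p x) := by
      show mS θL * g θH x + (1 - mS θL) * g θL x - g p x = _; ring
    rw [hMeq]
    have h1 : mS θL * (g θH x - g p x) ≤ (1 / lS) * Real.log ((1 - p) / (1 - θH)) := by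
      calc mS θL * (g θH x - g p x) ≤ mS θL * ((1 / lS) * Real.log ((1 - p) / (1 - θH))) :=
            mul_le_mul_of_nonneg_left hA hmS0.le
        _ ≤ 1 * ((1 / lS) * Real.log ((1 - p) / (1 - θH))) :=
            mul_le_mul_of_nonneg_right hmS1 hAnn
        _ = _ := one_mul _
    have h2 : (1 - mS θL) * (g θL x - g p x) ≤ ((1 - mS θL) / lS) * Real.log (p / θL) := by
      have : (1 - mS θL) * (g θL x - g p x) ≤ (1 - mS θL) * ((1 / lS) * Real.log (p / θL)) :=
        mul_le_mul_of_nonneg_left hB (by linarith)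
      calc (1 - mS θL) * (g θL x - g p x) ≤ (1 - mS θL) * ((1 / lS) * Real.log (p / θL)) := this
        _ = ((1 - mS θL) / lS) * Real.log (p / θL) := by ring
    linarith
  refine ⟨key, ?_⟩
  intro hAk
  set A := (1 / lS) * Real.log ((1 - p) / (1 - θH)) with hA_def
  set ε := k - A with hε_def
  have hε : 0 < ε := by simp only [hε_def]; linarith
  set c := (1 - m) / (m * θH) with hc_def
  have hc : 0 < c := div_pos (by linarith) (mul_pos hm0 hH0)
  set K := 2 * c * Real.sqrt p with hK_def
  have hK : 0 < K := by
    have := Real.sqrt_pos.mpr hp0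
    positivity
  refine ⟨min (p / 2) ((lS * ε / K) ^ 2), lt_min (by linarith) (by positivity), ?_, ?_⟩
  · exact lt_of_le_of_lt (min_le_left _ _) (by linarith)
  intro θL hθL0 hθLbar
  have hθLp : θL < p := lt_of_lt_of_le (lt_of_lt_of_le hθLbar (min_le_left _ _)) (by linarith)
  obtain ⟨hmS0, hmS1, hmS2⟩ := hmS_facts θL hθL0
  have hsq : Real.sqrt θL < lS * ε / K := by
    have h1 : θL < (lS * ε / K) ^ 2 := lt_of_lt_of_le hθLbar (min_le_right _ _)
    have h2 : Real.sqrt θL < Real.sqrt ((lS * ε / K) ^ 2) := by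
      exact Real.sqrt_lt_sqrt hθL0.le h1
    rwa [Real.sqrt_sq (by positivity)] at h2
  -- bound log (p/θL) ≤ 2 * sqrt p / sqrt θL
  have hsqθ : 0 < Real.sqrt θL := Real.sqrt_pos.mpr hθL0
  have hlogbound : Real.log (p / θL) ≤ 2 * Real.sqrt p / Real.sqrt θL := by
    have hpθ : 0 < p / θL := div_pos hp0 hθL0
    have h1 : Real.log (p / θL) = 2 * Real.log (Real.sqrt (p / θL)) := by
      rw [Real.log_sqrt hpθ.le]; ring
    have h2 : Real.log (Real.sqrt (p / θL)) ≤ Real.sqrt (p / θL) := by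
      have := Real.log_le_sub_one_of_pos (Real.sqrt_pos.mpr hpθ)
      linarith
    have h3 : Real.sqrt (p / θL) = Real.sqrt p / Real.sqrt θL := Real.sqrt_div hp0.le θL
    calc Real.log (p / θL) = 2 * Real.log (Real.sqrt (p / θL)) := by
          rw [Real.log_sqrt hpθ.le]; ring
      _ ≤ 2 * Real.sqrt (p / θL) := by linarith
      _ = 2 * Real.sqrt p / Real.sqrt θL := by rw [h3]; ring
  have hlognn : 0 ≤ Real.log (p / θL) := by
    apply Real.log_nonneg; rw [le_div_iff₀ hθL0]; linarith
  -- key product bound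
  have hprod : (1 - mS θL) * Real.log (p / θL) < lS * ε := by
    have step1 : (1 - mS θL) * Real.log (p / θL) ≤ (c * θL) * (2 * Real.sqrt p / Real.sqrt θL) := by
      apply mul_le_mul hmS2 hlogbound hlognn (by positivity)
    have step2 : (c * θL) * (2 * Real.sqrt p / Real.sqrt θL) = K * Real.sqrt θL := by
      rw [hK_def, show (c * θL) * (2 * Real.sqrt p / Real.sqrt θL)
        = 2 * c * Real.sqrt p * (θL / Real.sqrt θL) by ring, Real.div_sqrt]
    have step3 : K * Real.sqrt θL < lS * ε := by
      have := mul_lt_mul_of_pos_left hsq hK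
      rwa [mul_div_cancel₀ _ hK.ne'] at this
    exact lt_of_le_of_lt step1 (by rw [step2]; exact step3)
  -- conclude via ciSup_le
  have hsup : (⨆ x : Fin 2 → ℝ, M θL x) ≤ A + ((1 - mS θL) / lS) * Real.log (p / θL) :=
    ciSup_le (fun x => key θL hθL0 hθLp x)
  have hfinal : ((1 - mS θL) / lS) * Real.log (p / θL) < ε := by
    have h1 : ((1 - mS θL) / lS) * Real.log (p / θL)
        = (1 / lS) * ((1 - mS θL) * Real.log (p / θL)) := by ring
    rw [h1]
    have h2 : (1 / lS) * ((1 - mS θL) * Real.log (p / θL)) < (1 / lS) * (lS * ε) :=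
      mul_lt_mul_of_pos_left hprod (by positivity)
    rwa [show (1 / lS) * (lS * ε) = ε by field_simp] at h2
  linarith
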